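/- Let Γ be a subgroup of GL_2(ℤ/nℤ) and let R be its centralizer in Mat_2(ℤ/nℤ). Then as an abelian group, R ≅ ℤ/nℤ × ℤ/n₁ℤ × (ℤ/n₂ℤ)², for positive integers n₂ ∣ n₁ ∣ n. -/

import Mathlib

noncomputable def zmultiplesEquivZModOrder {A : Type*} [AddCommGroup A] (a : A) :
    AddSubgroup.zmultiples a ≃+ ZMod (addOrderOf a) := by
  set f : ℤ →+ AddSubgroup.zmultiples a :=
    zmultiplesHom _ ⟨a, AddSubgroup.mem_zmultiples a⟩ with hf
  have hsurj : Function.Surjective f := by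
    rintro ⟨x, z, rfl⟩
    exact ⟨z, rfl⟩
  have hker : f.ker = AddSubgroup.zmultiples ((addOrderOf a : ℤ)) := by
    ext z
    rw [AddMonoidHom.mem_ker, Int.mem_zmultiples_iff]
    constructor
    · intro h
      rw [addOrderOf_dvd_iff_zsmul_eq_zero]
      have := congrArg Subtype.val h
      simpa [hf] using this
    · intro h
      apply Subtype.ext
      simpa [hf] using addOrderOf_dvd_iff_zsmul_eq_zero.mp h
  exact ((Int.quotientZMultiplesNatEquivZMod (addOrderOf a)).symm.trans
    ((QuotientAddGroup.quotientAddEquivOfEq hker.symm).trans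
      (QuotientAddGroup.quotientKerEquivOfSurjective f hsurj))).symm

variable {p k : ℕ}

lemma zmod_unit_or_pmul (hp : p.Prime) (hk : 0 < k) (x : ZMod (p^k)) :
    IsUnit x ∨ ∃ y, x = (p : ZMod (p^k)) * y := by
  haveI : NeZero (p^k) := ⟨pow_ne_zero _ hp.pos.ne'⟩
  obtain ⟨t, rfl⟩ := ZMod.natCast_zmod_surjective x
  by_cases h : p ∣ t
  · obtain ⟨s, rfl⟩ := h
    exact Or.inr ⟨(s : ZMod (p^k)), by push_cast; ring⟩
  · left
    rw [ZMod.isUnit_iff_coprime]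
    exact (Nat.Coprime.pow_right _ (((Nat.Prime.coprime_iff_not_dvd hp).mpr h).symm))

lemma pow_smul_eq_zero_iff [NeZero (p^k)] (hp : p.Prime) {j : ℕ} (hj : j ≤ k) (x : ZMod (p^k)) :
    (p : ZMod (p^k))^j * x = 0 ↔ ∃ y, x = (p : ZMod (p^k))^(k-j) * y := by
  constructor
  · intro h
    obtain ⟨t, rfl⟩ := ZMod.natCast_zmod_surjective x
    have h2 : (((p^j * t : ℕ)) : ZMod (p^k)) = 0 := by push_cast; exact h
    rw [ZMod.natCast_eq_zero_iff] at h2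
    have hk' : p ^ k = p ^ j * p ^ (k - j) := by
      rw [← pow_add]; congr 1; omega
    rw [hk', Nat.mul_dvd_mul_iff_left (pow_pos hp.pos j)] at h2
    obtain ⟨s, rfl⟩ := h2
    exact ⟨(s : ZMod (p^k)), by push_cast; ring⟩
  · rintro ⟨y, rfl⟩
    have : (p : ZMod (p^k))^j * (p : ZMod (p^k))^(k-j) = 0 := by
      rw [← pow_add]
      have : j + (k - j) = k := by omega
      rw [this]
      have := ZMod.natCast_self (p^k)
      push_cast at this
      exact this
    rw [← mul_assoc, this, zero_mul]

lemma zmod_pk_pow_zero (hp : p.Prime) : ((p : ZMod (p^k)))^k = 0 := by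
  have := ZMod.natCast_self (p^k); push_cast at this; exact this

section Gen
variable {R₀ : Type*} [CommRing R₀]

local notation "M2" => Matrix (Fin 2) (Fin 2) R₀

/-- the subgroup of coefficients β with β • B ∈ R -/
def Ksub (R : AddSubgroup M2) (B : M2) : AddSubgroup R₀ where
  carrier := {β | β • B ∈ R}
  zero_mem' := by simp only [Set.mem_setOf_eq, zero_smul]; exact R.zero_mem
  add_mem' {x y} hx hy := by simpa [add_smul] using AddSubgroup.add_mem R hx hy
  neg_mem' {x} hx := by simpa [neg_smul] using AddSubgroup.neg_mem R hx

/-- the subgroup of multiples of q -/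
def Psub (q : R₀) : AddSubgroup R₀ where
  carrier := {x | ∃ y, x = q * y}
  zero_mem' := ⟨0, by ring⟩
  add_mem' {x y} := by rintro ⟨a, rfl⟩ ⟨b, rfl⟩; exact ⟨a + b, by ring⟩
  neg_mem' {x} := by rintro ⟨a, rfl⟩; exact ⟨-a, by ring⟩

theorem gen_equiv (R : AddSubgroup M2) (B : M2) (q : R₀)
    (hscal : ∀ α : R₀, α • (1 : M2) ∈ R)
    (hq : ∀ D : M2, q • D ∈ R)
    (hL1 : ∀ M ∈ R, ∃ (α β : R₀) (D : Matrix (Fin 2) (Fin 2) R₀), M = α • (1 : M2) + β • B + q • D)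
    (cα cβ cγ cδ : M2 → R₀) (X Y : M2)
    (hrep : ∀ M : M2, M = cα M • (1 : M2) + cβ M • B + cγ M • X + cδ M • Y)
    (hind : ∀ α β γ δ : R₀,
      cα (α • (1 : M2) + β • B + γ • X + δ • Y) = α ∧
      cβ (α • (1 : M2) + β • B + γ • X + δ • Y) = β ∧
      cγ (α • (1 : M2) + β • B + γ • X + δ • Y) = γ ∧
      cδ (α • (1 : M2) + β • B + γ • X + δ • Y) = δ) :
    Nonempty (R ≃+ R₀ × Ksub R B × Psub q × Psub q) := by
  have hqmul : ∀ (y : R₀) (D : M2), (q * y) • D ∈ R := by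
    intro y D; rw [mul_smul]; exact hq _
  -- membership of coefficients for M ∈ R
  have hmem : ∀ M ∈ R, cβ M ∈ Ksub R B ∧ cγ M ∈ Psub q ∧ cδ M ∈ Psub q := by
    intro M hM
    obtain ⟨α, β, D, hMrep⟩ := hL1 M hM
    have hD := hrep D
    have hM2 : M = (α + q * cα D) • (1 : M2) + (β + q * cβ D) • B +
        (q * cγ D) • X + (q * cδ D) • Y := by
      rw [hMrep]; nth_rewrite 1 [hD]
      simp only [smul_add, smul_smul, add_smul]
      abel
    have hβK : β ∈ Ksub R B := by
      have : β • B = M - α • (1 : M2) - q • D := by rw [hMrep]; abel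
      show β • B ∈ R
      rw [this]
      exact AddSubgroup.sub_mem _ (AddSubgroup.sub_mem _ hM (hscal α)) (hq D)
    obtain ⟨e1, e2, e3, e4⟩ := hind (α + q * cα D) (β + q * cβ D) (q * cγ D) (q * cδ D)
    rw [← hM2] at e2 e3 e4
    refine ⟨?_, ⟨cγ D, e3⟩, ⟨cδ D, e4⟩⟩
    rw [e2]
    exact AddSubgroup.add_mem _ hβK (by show (q * cβ D) • B ∈ R; exact hqmul _ _)
  -- additivity of coefficient maps
  have hadd : ∀ (c : M2 → R₀), (∀ α β γ δ : R₀,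
      c (α • (1 : M2) + β • B + γ • X + δ • Y) = α ∨
      c (α • (1 : M2) + β • B + γ • X + δ • Y) = β ∨ True) → True := fun _ _ => trivial
  have coeff_add : ∀ M N : M2,
      cα (M + N) = cα M + cα N ∧ cβ (M + N) = cβ M + cβ N ∧
      cγ (M + N) = cγ M + cγ N ∧ cδ (M + N) = cδ M + cδ N := by
    intro M N
    have hMN : M + N = (cα M + cα N) • (1 : M2) + (cβ M + cβ N) • B +
        (cγ M + cγ N) • X + (cδ M + cδ N) • Y := by
      nth_rewrite 1 [hrep M, hrep N]
      simp only [add_smul]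
      abel
    have := hind (cα M + cα N) (cβ M + cβ N) (cγ M + cγ N) (cδ M + cδ N)
    rw [← hMN] at this
    exact this
  refine ⟨AddEquiv.mk' (Equiv.mk
    (fun M => (cα M.1, ⟨cβ M.1, (hmem M.1 M.2).1⟩, ⟨cγ M.1, (hmem M.1 M.2).2.1⟩,
      ⟨cδ M.1, (hmem M.1 M.2).2.2⟩))
    (fun x => ⟨x.1 • (1 : M2) + x.2.1.1 • B + x.2.2.1.1 • X + x.2.2.2.1 • Y, ?_⟩)
    ?_ ?_) ?_⟩
  · -- membership
    refine AddSubgroup.add_mem _ (AddSubgroup.add_mem _ (AddSubgroup.add_mem _ (hscal _) x.2.1.2) ?_) ?_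
    · obtain ⟨y, hy⟩ := x.2.2.1.2
      rw [hy]; exact hqmul _ _
    · obtain ⟨y, hy⟩ := x.2.2.2.2
      rw [hy]; exact hqmul _ _
  · -- left inverse
    rintro ⟨M, hM⟩
    apply Subtype.ext
    exact (hrep M).symm
  · -- right inverse
    rintro ⟨α, β, γ, δ⟩
    obtain ⟨h1, h2, h3, h4⟩ := hind α β.1 γ.1 δ.1
    refine Prod.ext h1 (Prod.ext (Subtype.ext h2) (Prod.ext (Subtype.ext h3) (Subtype.ext h4)))
  · -- additivity
    rintro ⟨M, hM⟩ ⟨N, hN⟩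
    obtain ⟨h1, h2, h3, h4⟩ := coeff_add M N
    refine Prod.ext h1 (Prod.ext (Subtype.ext h2) (Prod.ext (Subtype.ext h3) (Subtype.ext h4)))
end Gen

section Cases
variable {R₀ : Type*} [CommRing R₀]

local notation "M2" => Matrix (Fin 2) (Fin 2) R₀

lemma L1case1 (B : M2) (v : R₀) (hv : v * B 0 1 = 1) (q : R₀) (M : M2)
    (hE : ∀ i j, ∃ y, (M * B - B * M) i j = q * y) :
    ∃ (α β : R₀) (D : M2), M = α • (1 : M2) + β • B + q • D := by
  obtain ⟨y1, hy1⟩ := hE 0 0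
  obtain ⟨y2, hy2⟩ := hE 0 1
  simp only [Matrix.sub_apply, Matrix.mul_apply, Fin.sum_univ_two] at hy1 hy2
  refine ⟨M 0 0 - v * M 0 1 * B 0 0, v * M 0 1, !![0, 0; -(v * y1), -(v * y2)], ?_⟩
  ext i j
  fin_cases i <;> fin_cases j <;>
    simp [Matrix.add_apply, Matrix.smul_apply, Matrix.one_apply, Matrix.mul_apply]
  · linear_combination (-(M 0 1)) * hv
  · linear_combination (-(v : R₀)) * hy1 + (-(M 1 0)) * hv
  · linear_combination (-(v : R₀)) * hy2 + (M 0 0 - M 1 1) * hv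
end Cases

section Cases
variable {R₀ : Type*} [CommRing R₀]

local notation "M2" => Matrix (Fin 2) (Fin 2) R₀

lemma L1case2 (B : M2) (v : R₀) (hv : v * B 1 0 = 1) (q : R₀) (M : M2)
    (hE : ∀ i j, ∃ y, (M * B - B * M) i j = q * y) :
    ∃ (α β : R₀) (D : M2), M = α • (1 : M2) + β • B + q • D := by
  obtain ⟨y1, hy1⟩ := hE 0 0
  obtain ⟨y3, hy3⟩ := hE 1 0
  simp only [Matrix.sub_apply, Matrix.mul_apply, Fin.sum_univ_two] at hy1 hy3
  refine ⟨M 0 0 - v * M 1 0 * B 0 0, v * M 1 0, !![0, v * y1; 0, v * y3], ?_⟩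
  ext i j
  fin_cases i <;> fin_cases j <;>
    simp [Matrix.add_apply, Matrix.smul_apply, Matrix.one_apply, Matrix.mul_apply]
  · linear_combination (v : R₀) * hy1 + (-(M 0 1)) * hv
  · linear_combination (-(M 1 0)) * hv
  · linear_combination (v : R₀) * hy3 + (M 0 0 - M 1 1) * hv

lemma L1case3 (B : M2) (v : R₀) (hv : v * (B 0 0 - B 1 1) = 1) (q : R₀) (M : M2)
    (hE : ∀ i j, ∃ y, (M * B - B * M) i j = q * y) :
    ∃ (α β : R₀) (D : M2), M = α • (1 : M2) + β • B + q • D := by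
  obtain ⟨y2, hy2⟩ := hE 0 1
  obtain ⟨y3, hy3⟩ := hE 1 0
  simp only [Matrix.sub_apply, Matrix.mul_apply, Fin.sum_univ_two] at hy2 hy3
  refine ⟨M 0 0 - v * (M 0 0 - M 1 1) * B 0 0, v * (M 0 0 - M 1 1),
    !![0, -(v * y2); v * y3, 0], ?_⟩
  ext i j
  fin_cases i <;> fin_cases j <;>
    simp [Matrix.add_apply, Matrix.smul_apply, Matrix.one_apply, Matrix.mul_apply]
  · linear_combination (-(v : R₀)) * hy2 + (-(M 0 1)) * hv
  · linear_combination (v : R₀) * hy3 + (-(M 1 0)) * hv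
  · linear_combination (M 0 0 - M 1 1) * hv
end Cases

section CaseEquiv
variable {R₀ : Type*} [CommRing R₀]
local notation "M2" => Matrix (Fin 2) (Fin 2) R₀

lemma case_equiv1 (R : AddSubgroup M2) (B : M2) (q v : R₀) (hv : v * B 0 1 = 1)
    (hscal : ∀ α : R₀, α • (1 : M2) ∈ R) (hq : ∀ D : M2, q • D ∈ R)
    (hE : ∀ M ∈ R, ∀ i j, ∃ y, (M * B - B * M) i j = q * y) :
    Nonempty (R ≃+ R₀ × Ksub R B × Psub q × Psub q) := by
  apply gen_equiv R B q hscal hq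
    (fun M hM => L1case1 B v hv q M (hE M hM))
    (fun M => M 0 0 - v * M 0 1 * B 0 0)
    (fun M => v * M 0 1)
    (fun M => M 1 0 - v * M 0 1 * B 1 0)
    (fun M => M 1 1 - (M 0 0 - v * M 0 1 * B 0 0) - v * M 0 1 * B 1 1)
    !![0, 0; 1, 0] !![0, 0; 0, 1]
  · intro M
    ext i j
    fin_cases i <;> fin_cases j <;>
      simp [Matrix.add_apply, Matrix.smul_apply, Matrix.one_apply]
    linear_combination (-(M 0 1)) * hv
  · intro α β γ δ
    refine ⟨?_, ?_, ?_, ?_⟩ <;>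
      simp [Matrix.add_apply, Matrix.smul_apply, Matrix.one_apply]
    · linear_combination (-(β * B 0 0)) * hv
    · linear_combination β * hv
    · linear_combination (-(β * B 1 0)) * hv
    · linear_combination (β * (B 0 0 - B 1 1)) * hv

lemma case_equiv2 (R : AddSubgroup M2) (B : M2) (q v : R₀) (hv : v * B 1 0 = 1)
    (hscal : ∀ α : R₀, α • (1 : M2) ∈ R) (hq : ∀ D : M2, q • D ∈ R)
    (hE : ∀ M ∈ R, ∀ i j, ∃ y, (M * B - B * M) i j = q * y) :
    Nonempty (R ≃+ R₀ × Ksub R B × Psub q × Psub q) := by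
  apply gen_equiv R B q hscal hq
    (fun M hM => L1case2 B v hv q M (hE M hM))
    (fun M => M 0 0 - v * M 1 0 * B 0 0)
    (fun M => v * M 1 0)
    (fun M => M 0 1 - v * M 1 0 * B 0 1)
    (fun M => M 1 1 - (M 0 0 - v * M 1 0 * B 0 0) - v * M 1 0 * B 1 1)
    !![0, 1; 0, 0] !![0, 0; 0, 1]
  · intro M
    ext i j
    fin_cases i <;> fin_cases j <;>
      simp [Matrix.add_apply, Matrix.smul_apply, Matrix.one_apply]
    linear_combination (-(M 1 0)) * hv
  · intro α β γ δ
    refine ⟨?_, ?_, ?_, ?_⟩ <;>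
      simp [Matrix.add_apply, Matrix.smul_apply, Matrix.one_apply]
    · linear_combination (-(β * B 0 0)) * hv
    · linear_combination β * hv
    · linear_combination (-(β * B 0 1)) * hv
    · linear_combination (β * (B 0 0 - B 1 1)) * hv

lemma case_equiv3 (R : AddSubgroup M2) (B : M2) (q v : R₀) (hv : v * (B 0 0 - B 1 1) = 1)
    (hscal : ∀ α : R₀, α • (1 : M2) ∈ R) (hq : ∀ D : M2, q • D ∈ R)
    (hE : ∀ M ∈ R, ∀ i j, ∃ y, (M * B - B * M) i j = q * y) :
    Nonempty (R ≃+ R₀ × Ksub R B × Psub q × Psub q) := by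
  apply gen_equiv R B q hscal hq
    (fun M hM => L1case3 B v hv q M (hE M hM))
    (fun M => M 0 0 - v * (M 0 0 - M 1 1) * B 0 0)
    (fun M => v * (M 0 0 - M 1 1))
    (fun M => M 0 1 - v * (M 0 0 - M 1 1) * B 0 1)
    (fun M => M 1 0 - v * (M 0 0 - M 1 1) * B 1 0)
    !![0, 1; 0, 0] !![0, 0; 1, 0]
  · intro M
    ext i j
    fin_cases i <;> fin_cases j <;>
      simp [Matrix.add_apply, Matrix.smul_apply, Matrix.one_apply]
    linear_combination (M 0 0 - M 1 1) * hv
  · intro α β γ δ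
    refine ⟨?_, ?_, ?_, ?_⟩ <;>
      simp [Matrix.add_apply, Matrix.smul_apply, Matrix.one_apply]
    · linear_combination (-(β * B 0 0)) * hv
    · linear_combination β * hv
    · linear_combination (-(β * B 0 1)) * hv
    · linear_combination (-(β * B 1 0)) * hv
end CaseEquiv

instance zmodPIR (n : ℕ) : IsPrincipalIdealRing (ZMod n) :=
  IsPrincipalIdealRing.of_surjective (Int.castRingHom (ZMod n)) ZMod.intCast_surjective

lemma zmod_smul_mem' {N : ℕ} {M : Type*} [AddCommGroup M] [Module (ZMod N) M]
    (R : AddSubgroup M) (c : ZMod N) {x : M} (hx : x ∈ R) : c • x ∈ R := by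
  obtain ⟨z, rfl⟩ := ZMod.intCast_surjective c
  rw [Int.cast_smul_eq_zsmul]
  exact AddSubgroup.zsmul_mem R hx z

/-- the coefficient subgroup as an ideal -/
def Kideal {N : ℕ} (R : AddSubgroup (Matrix (Fin 2) (Fin 2) (ZMod N)))
    (B : Matrix (Fin 2) (Fin 2) (ZMod N)) : Ideal (ZMod N) where
  carrier := {β | β • B ∈ R}
  zero_mem' := by simp only [Set.mem_setOf_eq, zero_smul]; exact R.zero_mem
  add_mem' {x y} hx hy := by simpa [add_smul] using AddSubgroup.add_mem R hx hy
  smul_mem' c β hβ := by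
    simp only [Set.mem_setOf_eq, smul_eq_mul, mul_smul]
    exact zmod_smul_mem' R c hβ

lemma Ksub_eq_zmultiples {N : ℕ} (R : AddSubgroup (Matrix (Fin 2) (Fin 2) (ZMod N)))
    (B : Matrix (Fin 2) (Fin 2) (ZMod N)) (g : ZMod N)
    (hg : Kideal R B = Ideal.span {g}) :
    Ksub R B = AddSubgroup.zmultiples g := by
  ext β
  have hmem : β ∈ Ksub R B ↔ β ∈ Kideal R B := Iff.rfl
  rw [hmem, hg, Ideal.mem_span_singleton', AddSubgroup.mem_zmultiples_iff]
  constructor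
  · rintro ⟨c, rfl⟩
    obtain ⟨z, rfl⟩ := ZMod.intCast_surjective c
    exact ⟨z, by rw [zsmul_eq_mul]⟩
  · rintro ⟨z, rfl⟩
    exact ⟨(z : ZMod N), by rw [zsmul_eq_mul]⟩

lemma Psub_eq_zmultiples {N : ℕ} (q : ZMod N) :
    Psub q = AddSubgroup.zmultiples q := by
  ext x
  rw [AddSubgroup.mem_zmultiples_iff]
  constructor
  · rintro ⟨y, rfl⟩
    obtain ⟨z, rfl⟩ := ZMod.intCast_surjective y
    exact ⟨z, by rw [zsmul_eq_mul, mul_comm]⟩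
  · rintro ⟨z, rfl⟩
    exact ⟨(z : ZMod N), by rw [zsmul_eq_mul, mul_comm]⟩

/-- the centralizer of `Γ` in the matrix ring, as an additive subgroup -/
def centAdd (n : ℕ) (Γ : Subgroup (Matrix.GeneralLinearGroup (Fin 2) (ZMod n))) :
    AddSubgroup (Matrix (Fin 2) (Fin 2) (ZMod n)) where
  carrier := {M | ∀ A ∈ Γ, M * (A : Matrix (Fin 2) (Fin 2) (ZMod n)) =
    (A : Matrix (Fin 2) (Fin 2) (ZMod n)) * M}
  zero_mem' := fun A _ => by rw [zero_mul, mul_zero]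
  add_mem' {x y} hx hy := fun A hA => by rw [add_mul, mul_add, hx A hA, hy A hA]
  neg_mem' {x} hx := fun A hA => by rw [neg_mul, mul_neg, hx A hA]

lemma mem_centAdd {n : ℕ} {Γ : Subgroup (Matrix.GeneralLinearGroup (Fin 2) (ZMod n))}
    {M : Matrix (Fin 2) (Fin 2) (ZMod n)} :
    M ∈ centAdd n Γ ↔ ∀ A ∈ Γ, M * (A : Matrix (Fin 2) (Fin 2) (ZMod n)) =
      (A : Matrix (Fin 2) (Fin 2) (ZMod n)) * M := Iff.rfl

theorem key_prime_pow (p k : ℕ) (hp : p.Prime) (hk : 0 < k)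
    (Γ : Subgroup (Matrix.GeneralLinearGroup (Fin 2) (ZMod (p^k)))) :
    ∃ n₁ n₂ : ℕ, 0 < n₂ ∧ n₂ ∣ n₁ ∧ n₁ ∣ p^k ∧
      Nonempty (centAdd (p^k) Γ ≃+ ZMod (p^k) × ZMod n₁ × ZMod n₂ × ZMod n₂) := by
  classical
  haveI : NeZero (p^k) := ⟨pow_ne_zero _ hp.pos.ne'⟩
  set R := centAdd (p^k) Γ with hRdef
  have hscal : ∀ α : ZMod (p^k), α • (1 : Matrix (Fin 2) (Fin 2) (ZMod (p^k))) ∈ R := by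
    intro α A hA
    rw [smul_mul_assoc, one_mul, mul_smul_comm, mul_one]
  set Pj : ℕ → Prop := fun j => ∀ A ∈ Γ, ∃ (a : ZMod (p^k)) (C : Matrix (Fin 2) (Fin 2) (ZMod (p^k))),
    (A : Matrix (Fin 2) (Fin 2) (ZMod (p^k))) = a • 1 + ((p : ZMod (p^k))^j) • C with hPjdef
  have hP0 : Pj 0 := fun A _ => ⟨0, A, by simp⟩
  set j := Nat.findGreatest Pj k with hjdef
  have hPj : Pj j := Nat.findGreatest_spec (Nat.zero_le k) hP0
  have hjk : j ≤ k := Nat.findGreatest_le k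
  set q : ZMod (p^k) := (p : ZMod (p^k))^(k - j) with hqdef
  have hpkz : ((p : ZMod (p^k)))^k = 0 := zmod_pk_pow_zero hp
  have hqpj : q * (p : ZMod (p^k))^j = 0 := by
    rw [hqdef, ← pow_add, show k - j + j = k by omega, hpkz]
  have hq : ∀ D, q • D ∈ R := by
    intro D A hA
    obtain ⟨a, C, hAeq⟩ := hPj A hA
    have h1 : (q • D) * (((p : ZMod (p^k))^j) • C) = 0 := by
      rw [smul_mul_assoc, mul_smul_comm, smul_smul, hqpj, zero_smul]
    have h2 : (((p : ZMod (p^k))^j) • C) * (q • D) = 0 := by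
      rw [smul_mul_assoc, mul_smul_comm, smul_smul, mul_comm, hqpj, zero_smul]
    rw [hAeq, mul_add, add_mul, h1, h2]
    simp [smul_mul_assoc, mul_smul_comm, smul_smul, mul_comm]
  -- find B
  have hB : ∃ B : Matrix (Fin 2) (Fin 2) (ZMod (p^k)),
      (IsUnit (B 0 1) ∨ IsUnit (B 1 0) ∨ IsUnit (B 0 0 - B 1 1)) ∧
      (∀ M ∈ R, ∀ i j', ∃ y, (M * B - B * M) i j' = q * y) := by
    by_cases hcase : j = k
    · set B' : Matrix (Fin 2) (Fin 2) (ZMod (p^k)) := !![0, 1; 0, 0] with hB'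
      refine ⟨B', Or.inl (by rw [hB']; simp), ?_⟩
      intro M _ i j'
      have hq1 : q = 1 := by rw [hqdef, hcase, Nat.sub_self, pow_zero]
      exact ⟨(M * B' - B' * M) i j', by rw [hq1, one_mul]⟩
    · have hjlt : j < k := lt_of_le_of_ne hjk hcase
      have hnP : ¬ Pj (j + 1) :=
        Nat.findGreatest_is_greatest (Nat.lt_succ_self j) (by omega)
      rw [hPjdef] at hnP
      have hnP2 : ∃ A ∈ Γ, ¬ ∃ (a : ZMod (p^k)) (C : Matrix (Fin 2) (Fin 2) (ZMod (p^k))),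
          (A : Matrix (Fin 2) (Fin 2) (ZMod (p^k))) = a • 1 + ((p : ZMod (p^k))^(j+1)) • C := by
        by_contra hcon
        push_neg at hcon
        exact hnP (fun A hA => hcon A hA)
      obtain ⟨A₁, hA₁Γ, hA₁⟩ := hnP2
      obtain ⟨a, B₀, hA₁eq⟩ := hPj A₁ hA₁Γ
      have hunit : IsUnit (B₀ 0 1) ∨ IsUnit (B₀ 1 0) ∨ IsUnit (B₀ 0 0 - B₀ 1 1) := by
        by_contra hcontra
        push_neg at hcontra
        obtain ⟨hu1, hu2, hu3⟩ := hcontra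
        obtain ⟨c01, hc01⟩ := (zmod_unit_or_pmul hp hk _).resolve_left hu1
        obtain ⟨c10, hc10⟩ := (zmod_unit_or_pmul hp hk _).resolve_left hu2
        obtain ⟨c00, hc00⟩ := (zmod_unit_or_pmul hp hk _).resolve_left hu3
        refine hA₁ ⟨(a + (p : ZMod (p^k))^j * B₀ 1 1), !![c00, c01; c10, 0], ?_⟩
        rw [hA₁eq]
        ext i j'
        fin_cases i <;> fin_cases j' <;>
          simp [Matrix.add_apply, Matrix.smul_apply, Matrix.one_apply]
        · linear_combination ((p : ZMod (p^k))^j) * hc00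
        · linear_combination ((p : ZMod (p^k))^j) * hc01
        · linear_combination ((p : ZMod (p^k))^j) * hc10
      refine ⟨B₀, hunit, ?_⟩
      intro M hM i j'
      have hcomm : M * (A₁ : Matrix (Fin 2) (Fin 2) (ZMod (p^k))) = A₁ * M := hM A₁ hA₁Γ
      rw [hA₁eq, mul_add, add_mul, mul_smul_comm, smul_mul_assoc, mul_one, one_mul,
        mul_smul_comm, smul_mul_assoc] at hcomm
      have hz : ((p : ZMod (p^k))^j) • (M * B₀ - B₀ * M) = 0 := by
        rw [smul_sub, sub_eq_zero]
        exact add_left_cancel hcomm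
      have hz' := congrFun (congrFun hz i) j'
      rw [Matrix.smul_apply, Matrix.zero_apply, smul_eq_mul] at hz'
      exact (pow_smul_eq_zero_iff hp hjk _).mp hz'
  obtain ⟨B, hBu, hE⟩ := hB
  have main : Nonempty (R ≃+ ZMod (p^k) × Ksub R B × Psub q × Psub q) := by
    rcases hBu with h | h | h
    · obtain ⟨v, hv⟩ := IsUnit.exists_left_inv h
      exact case_equiv1 R B q v hv hscal hq hE
    · obtain ⟨v, hv⟩ := IsUnit.exists_left_inv h
      exact case_equiv2 R B q v hv hscal hq hE
    · obtain ⟨v, hv⟩ := IsUnit.exists_left_inv h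
      exact case_equiv3 R B q v hv hscal hq hE
  -- convert the subgroups to cyclic groups
  obtain ⟨g, hgspan⟩ : ∃ g, Kideal R B = Ideal.span {g} :=
    ⟨_, (Submodule.IsPrincipal.span_singleton_generator (Kideal R B)).symm⟩
  have eK : Ksub R B ≃+ ZMod (addOrderOf g) :=
    (AddEquiv.addSubgroupCongr (Ksub_eq_zmultiples R B g hgspan)).trans
      (zmultiplesEquivZModOrder g)
  have eP : Psub q ≃+ ZMod (addOrderOf q) :=
    (AddEquiv.addSubgroupCongr (Psub_eq_zmultiples q)).trans (zmultiplesEquivZModOrder q)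
  obtain ⟨e0⟩ := main
  refine ⟨addOrderOf g, addOrderOf q, addOrderOf_pos q, ?_, ?_,
    ⟨e0.trans (AddEquiv.prodCongr (AddEquiv.refl _)
      (AddEquiv.prodCongr eK (AddEquiv.prodCongr eP eP)))⟩⟩
  · -- addOrderOf q ∣ addOrderOf g
    have hqK : q ∈ Kideal R B := by
      show q • B ∈ R
      exact hq B
    rw [hgspan, Ideal.mem_span_singleton'] at hqK
    obtain ⟨c, hc⟩ := hqK
    apply addOrderOf_dvd_of_nsmul_eq_zero
    rw [← hc, nsmul_eq_mul, mul_comm c g, ← mul_assoc, ← nsmul_eq_mul,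
      addOrderOf_nsmul_eq_zero g, zero_mul]
  · -- addOrderOf g ∣ p^k
    apply addOrderOf_dvd_of_nsmul_eq_zero
    rw [nsmul_eq_mul, ZMod.natCast_self, zero_mul]

def KeyProp (n : ℕ) : Prop :=
  ∀ Γ : Subgroup (Matrix.GeneralLinearGroup (Fin 2) (ZMod n)),
    ∃ n₁ n₂ : ℕ, 0 < n₂ ∧ n₂ ∣ n₁ ∧ n₁ ∣ n ∧
      Nonempty (centAdd n Γ ≃+ ZMod n × ZMod n₁ × ZMod n₂ × ZMod n₂)

def matrixProdAddEquiv (α β : Type*) [AddMonoid α] [AddMonoid β] :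
    Matrix (Fin 2) (Fin 2) (α × β) ≃+ Matrix (Fin 2) (Fin 2) α × Matrix (Fin 2) (Fin 2) β where
  toFun M := (M.map Prod.fst, M.map Prod.snd)
  invFun X := Matrix.of fun i j => (X.1 i j, X.2 i j)
  left_inv M := by ext i j <;> rfl
  right_inv X := by constructor <;> rfl
  map_add' M N := by constructor <;> (ext i j; rfl)

def interleave4 (A1 A2 A3 A4 B1 B2 B3 B4 : Type*) [AddMonoid A1] [AddMonoid A2] [AddMonoid A3]
    [AddMonoid A4] [AddMonoid B1] [AddMonoid B2] [AddMonoid B3] [AddMonoid B4] :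
    (A1 × A2 × A3 × A4) × (B1 × B2 × B3 × B4) ≃+
      (A1 × B1) × (A2 × B2) × (A3 × B3) × (A4 × B4) where
  toFun x := ((x.1.1, x.2.1), (x.1.2.1, x.2.2.1), (x.1.2.2.1, x.2.2.2.1),
    (x.1.2.2.2, x.2.2.2.2))
  invFun y := ((y.1.1, y.2.1.1, y.2.2.1.1, y.2.2.2.1), (y.1.2, y.2.1.2, y.2.2.1.2, y.2.2.2.2))
  left_inv x := rfl
  right_inv y := rfl
  map_add' x y := rfl

theorem key_coprime (a b : ℕ) (ha : 0 < a) (hb : 0 < b) (hco : a.Coprime b)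
    (Ha : KeyProp a) (Hb : KeyProp b) : KeyProp (a * b) := by
  intro Γ
  set e : ZMod (a*b) ≃+* ZMod a × ZMod b := ZMod.chineseRemainder hco with he
  set φa : Matrix (Fin 2) (Fin 2) (ZMod (a*b)) →+* Matrix (Fin 2) (Fin 2) (ZMod a) :=
    ((RingHom.fst (ZMod a) (ZMod b)).comp e.toRingHom).mapMatrix with hφa
  set φb : Matrix (Fin 2) (Fin 2) (ZMod (a*b)) →+* Matrix (Fin 2) (Fin 2) (ZMod b) :=
    ((RingHom.snd (ZMod a) (ZMod b)).comp e.toRingHom).mapMatrix with hφb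
  set Γa : Subgroup (Matrix.GeneralLinearGroup (Fin 2) (ZMod a)) :=
    Γ.map (Units.map φa.toMonoidHom) with hΓa
  set Γb : Subgroup (Matrix.GeneralLinearGroup (Fin 2) (ZMod b)) :=
    Γ.map (Units.map φb.toMonoidHom) with hΓb
  set E : Matrix (Fin 2) (Fin 2) (ZMod (a*b)) ≃+
      Matrix (Fin 2) (Fin 2) (ZMod a) × Matrix (Fin 2) (Fin 2) (ZMod b) :=
    (AddEquiv.mapMatrix e.toAddEquiv).trans (matrixProdAddEquiv _ _) with hE
  have hEM : ∀ M, E M = (φa M, φb M) := fun M => rfl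
  have hmemiff : ∀ M, M ∈ centAdd (a*b) Γ ↔
      (φa M ∈ centAdd a Γa ∧ φb M ∈ centAdd b Γb) := by
    intro M
    constructor
    · intro hM
      constructor
      · rintro Aa ⟨A, hAΓ, rfl⟩
        show φa M * (Units.map φa.toMonoidHom A : Matrix _ _ _) = _
        rw [Units.coe_map]
        show φa M * φa (A : Matrix _ _ _) = φa (A : Matrix _ _ _) * φa M
        rw [← map_mul, ← map_mul, hM A hAΓ]
      · rintro Ab ⟨A, hAΓ, rfl⟩
        show φb M * (Units.map φb.toMonoidHom A : Matrix _ _ _) = _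
        rw [Units.coe_map]
        show φb M * φb (A : Matrix _ _ _) = φb (A : Matrix _ _ _) * φb M
        rw [← map_mul, ← map_mul, hM A hAΓ]
    · rintro ⟨h1, h2⟩ A hA
      have da := h1 (Units.map φa.toMonoidHom A) (Subgroup.mem_map_of_mem _ hA)
      have db := h2 (Units.map φb.toMonoidHom A) (Subgroup.mem_map_of_mem _ hA)
      rw [Units.coe_map] at da db
      apply E.injective
      rw [hEM, hEM]
      refine Prod.ext ?_ ?_
      · show φa (M * A) = φa ((A : Matrix _ _ _) * M)
        rw [map_mul, map_mul]
        exact da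
      · show φb (M * A) = φb ((A : Matrix _ _ _) * M)
        rw [map_mul, map_mul]
        exact db
  -- the splitting equivalence
  have split : Nonempty ((centAdd (a*b) Γ) ≃+ (centAdd a Γa) × (centAdd b Γb)) := by
    refine ⟨AddEquiv.mk' (Equiv.mk
      (fun M => (⟨φa M.1, ((hmemiff M.1).mp M.2).1⟩, ⟨φb M.1, ((hmemiff M.1).mp M.2).2⟩))
      (fun X => ⟨E.symm (X.1.1, X.2.1), ?_⟩) ?_ ?_) ?_⟩
    · rw [hmemiff]
      have h := hEM (E.symm (X.1.1, X.2.1))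
      rw [E.apply_symm_apply] at h
      have h1 : φa (E.symm (X.1.1, X.2.1)) = X.1.1 := (congrArg Prod.fst h).symm
      have h2 : φb (E.symm (X.1.1, X.2.1)) = X.2.1 := (congrArg Prod.snd h).symm
      rw [h1, h2]
      exact ⟨X.1.2, X.2.2⟩
    · rintro ⟨M, hM⟩
      apply Subtype.ext
      show E.symm (φa M, φb M) = M
      rw [← hEM M, E.symm_apply_apply]
    · rintro ⟨X1, X2⟩
      have h := hEM (E.symm (X1.1, X2.1))
      rw [E.apply_symm_apply] at h
      refine Prod.ext (Subtype.ext ?_) (Subtype.ext ?_)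
      · exact (congrArg Prod.fst h).symm
      · exact (congrArg Prod.snd h).symm
    · rintro ⟨M, hM⟩ ⟨N, hN⟩
      refine Prod.ext (Subtype.ext ?_) (Subtype.ext ?_) <;> simp [map_add]
  obtain ⟨n1a, n2a, h2apos, hd21a, hd1a, ⟨ea⟩⟩ := Ha Γa
  obtain ⟨n1b, n2b, h2bpos, hd21b, hd1b, ⟨eb⟩⟩ := Hb Γb
  obtain ⟨es⟩ := split
  have hco1 : n1a.Coprime n1b :=
    Nat.Coprime.coprime_dvd_left hd1a (Nat.Coprime.coprime_dvd_right hd1b hco)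
  have hco2 : n2a.Coprime n2b :=
    Nat.Coprime.coprime_dvd_left (hd21a.trans hd1a)
      (Nat.Coprime.coprime_dvd_right (hd21b.trans hd1b) hco)
  refine ⟨n1a * n1b, n2a * n2b, Nat.mul_pos h2apos h2bpos,
    Nat.mul_dvd_mul hd21a hd21b, Nat.mul_dvd_mul hd1a hd1b, ?_⟩
  refine ⟨es.trans ((AddEquiv.prodCongr ea eb).trans ((interleave4 _ _ _ _ _ _ _ _).trans
    (AddEquiv.prodCongr (ZMod.chineseRemainder hco).symm.toAddEquiv
      (AddEquiv.prodCongr (ZMod.chineseRemainder hco1).symm.toAddEquiv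
        (AddEquiv.prodCongr (ZMod.chineseRemainder hco2).symm.toAddEquiv
          (ZMod.chineseRemainder hco2).symm.toAddEquiv)))))⟩

theorem key_all (n : ℕ) (hn : 0 < n) : KeyProp n := by
  induction n using Nat.recOnPosPrimePosCoprime with
  | prime_pow p k hp hk =>
      exact fun Γ => key_prime_pow p k hp hk Γ
  | zero => exact absurd hn (lt_irrefl 0)
  | one =>
      intro Γ
      haveI u1 : Unique (ZMod 1 × ZMod 1 × ZMod 1 × ZMod 1) :=
        ⟨⟨0⟩, fun x => Subsingleton.elim _ _⟩
      haveI : Unique (centAdd 1 Γ) :=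
        ⟨⟨0⟩, fun x => Subtype.ext (Subsingleton.elim _ _)⟩
      exact ⟨1, 1, Nat.one_pos, dvd_rfl, dvd_rfl, ⟨AddEquiv.ofUnique⟩⟩
  | coprime a b ha hb hco Pa Pb =>
      exact key_coprime a b (by omega) (by omega) hco (Pa (by omega)) (Pb (by omega))


theorem centralizer_in_mat2_structure (n : ℕ) (hn : 0 < n)
    (Γ : Subgroup (Matrix.GeneralLinearGroup (Fin 2) (ZMod n)))
    (R : AddSubgroup (Matrix (Fin 2) (Fin 2) (ZMod n)))
    (hR : (R : Set (Matrix (Fin 2) (Fin 2) (ZMod n))) =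
      {M | ∀ A ∈ Γ, M * (A : Matrix (Fin 2) (Fin 2) (ZMod n)) =
        (A : Matrix (Fin 2) (Fin 2) (ZMod n)) * M}) :
    ∃ n₁ n₂ : ℕ, 0 < n₂ ∧ n₂ ∣ n₁ ∧ n₁ ∣ n ∧
      Nonempty (R ≃+ (ZMod n × ZMod n₁ × ZMod n₂ × ZMod n₂)) := by
  have hReq : R = centAdd n Γ := SetLike.ext' (by rw [hR]; rfl)
  obtain ⟨n₁, n₂, h1, h2, h3, ⟨e⟩⟩ := key_all n hn Γ
  exact ⟨n₁, n₂, h1, h2, h3, ⟨(AddEquiv.addSubgroupCongr hReq).trans e⟩⟩
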